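/- For every deterministic parity automaton A over the alphabet ℕ, the ω-language L_A is a finite Boolean combination of Gδ subsets of the Baire space ℕ^ω (i.e., L_A belongs to the Boolean algebra of subsets of ℕ^ω generated by the Gδ sets); in particular, L_A is a Borel subset of the Baire space. -/
import Mathlib


/-- The maximal color occurring infinitely often in the sequence `s` exists and is even. -/
def MaxInfEven (s : ℕ → ℕ) : Prop :=
  ∃ m, Even m ∧ {k | s k = m}.Infinite ∧ ∀ m', {k | s k = m'}.Infinite → m' ≤ m

/-- A deterministic parity automaton over the alphabet ℕ, with control states `Q`,
configurations in `Q × ℕ`, transition function `next` and coloring `color`. -/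
structure DPA (Q : Type) where
  q0 : Q
  next : Q × ℕ → ℕ → Q × ℕ
  color : Q → ℕ

/-- The run of `A` on `α`: the sequence of configurations starting in `(q₀, 0)`. -/
def DPA.run {Q : Type} (A : DPA Q) (α : ℕ → ℕ) : ℕ → Q × ℕ
  | 0 => (A.q0, 0)
  | k + 1 => A.next (DPA.run A α k) (α k)

/-- The ω-language recognized by `A`: the ω-words whose run has an even maximal color
occurring infinitely often. -/
def DPA.Lang {Q : Type} (A : DPA Q) : Set (ℕ → ℕ) :=
  {α | MaxInfEven (fun k => A.color (A.run α k).1)}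

/-- The Boolean combinations of a family `S` of sets: the smallest collection containing
`S` and closed under complement and (binary) union. -/
inductive BoolComb {X : Type} (S : Set (Set X)) : Set X → Prop
  | basic {s : Set X} : s ∈ S → BoolComb S s
  | compl {s : Set X} : BoolComb S s → BoolComb S sᶜ
  | union {s t : Set X} : BoolComb S s → BoolComb S t → BoolComb S (s ∪ t)

lemma infinite_iff' {P : ℕ → Prop} : {k | P k}.Infinite ↔ ∀ n, ∃ k, n ≤ k ∧ P k := by
  constructor
  · intro h n
    obtain ⟨k, hk, hkn⟩ := h.exists_gt n
    exact ⟨k, hkn.le, hk⟩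
  · intro h hf
    obtain ⟨N, hN⟩ := hf.bddAbove
    obtain ⟨k, hk, hPk⟩ := h (N + 1)
    exact absurd (hN hPk) (by omega)

def DPA.runFin {Q : Type} (A : DPA Q) : (k : ℕ) → (Fin k → ℕ) → Q × ℕ
  | 0, _ => (A.q0, 0)
  | k + 1, p => A.next (A.runFin k (fun i => p i.castSucc)) (p (Fin.last k))

lemma run_eq_runFin {Q : Type} (A : DPA Q) (α : ℕ → ℕ) (k : ℕ) :
    A.run α k = A.runFin k (fun i => α i) := by
  induction k with
  | zero => rfl
  | succ k ih => simp [DPA.run, DPA.runFin, ih]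

lemma isOpen_run_mem {Q : Type} (A : DPA Q) (k : ℕ) (s : Set (Q × ℕ)) :
    IsOpen {α : ℕ → ℕ | A.run α k ∈ s} := by
  have h : {α : ℕ → ℕ | A.run α k ∈ s} =
      (fun (α : ℕ → ℕ) (i : Fin k) => α i) ⁻¹' {p | A.runFin k p ∈ s} := by
    ext α; simp [run_eq_runFin]
  rw [h]
  exact (isOpen_discrete _).preimage (continuous_pi fun i => continuous_apply _)

def infSet {Q : Type} (A : DPA Q) (m : ℕ) : Set (ℕ → ℕ) :=
  {α | {k | A.color (A.run α k).1 = m}.Infinite}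

lemma isGδ_infSet {Q : Type} (A : DPA Q) (m : ℕ) : IsGδ (infSet A m) := by
  have h : infSet A m =
      ⋂ n, ⋃ k, ⋃ (_ : n ≤ k), {α : ℕ → ℕ | A.run α k ∈ {p | A.color p.1 = m}} := by
    ext α
    simp only [infSet, Set.mem_setOf_eq, infinite_iff', Set.mem_iInter, Set.mem_iUnion,
      Set.mem_setOf_eq]
    constructor
    · intro h n
      obtain ⟨k, hk, he⟩ := h n
      exact ⟨k, hk, he⟩
    · intro h n
      obtain ⟨k, hk, he⟩ := h n
      exact ⟨k, hk, he⟩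
  rw [h]
  exact .iInter_of_isOpen fun n =>
    isOpen_iUnion fun k => isOpen_iUnion fun _ => isOpen_run_mem A k _

lemma BoolComb.inter {X : Type} {S : Set (Set X)} {s t : Set X}
    (hs : BoolComb S s) (ht : BoolComb S t) : BoolComb S (s ∩ t) := by
  have h : s ∩ t = (sᶜ ∪ tᶜ)ᶜ := by rw [Set.compl_union, compl_compl, compl_compl]
  rw [h]
  exact (hs.compl.union ht.compl).compl

lemma boolcomb_biUnion {X : Type} [TopologicalSpace X] (F : Finset ℕ) (f : ℕ → Set X)
    (h : ∀ m ∈ F, BoolComb {s : Set X | IsGδ s} (f m)) :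
    BoolComb {s : Set X | IsGδ s} (⋃ m ∈ F, f m) := by
  induction F using Finset.induction with
  | empty =>
    simpa using BoolComb.basic (show (∅ : Set X) ∈ {s : Set X | IsGδ s} from IsGδ.empty)
  | @insert a F ha ih =>
    rw [Finset.set_biUnion_insert]
    exact (h a (Finset.mem_insert_self a F)).union
      (ih fun m hm => h m (Finset.mem_insert_of_mem hm))

lemma boolcomb_biInter {X : Type} [TopologicalSpace X] (F : Finset ℕ) (f : ℕ → Set X)
    (h : ∀ m ∈ F, BoolComb {s : Set X | IsGδ s} (f m)) :
    BoolComb {s : Set X | IsGδ s} (⋂ m ∈ F, f m) := by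
  induction F using Finset.induction with
  | empty =>
    simpa using BoolComb.basic (show (Set.univ : Set X) ∈ {s : Set X | IsGδ s} from IsGδ.univ)
  | @insert a F ha ih =>
    rw [Finset.set_biInter_insert]
    exact (h a (Finset.mem_insert_self a F)).inter
      (ih fun m hm => h m (Finset.mem_insert_of_mem hm))

lemma meas_of_boolcomb {s : Set (ℕ → ℕ)} (h : BoolComb {s : Set (ℕ → ℕ) | IsGδ s} s) :
    @MeasurableSet (ℕ → ℕ) (borel (ℕ → ℕ)) s := by
  letI : MeasurableSpace (ℕ → ℕ) := borel (ℕ → ℕ)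
  haveI : BorelSpace (ℕ → ℕ) := ⟨rfl⟩
  induction h with
  | basic h => exact h.measurableSet
  | compl _ ih => exact ih.compl
  | union _ _ ih1 ih2 => exact ih1.union ih2

/-- `L_A` is a finite Boolean combination of Gδ subsets of the Baire space; in
particular it is Borel. -/
theorem statement4 {Q : Type} [Fintype Q] (A : DPA Q) :
    BoolComb {s : Set (ℕ → ℕ) | IsGδ s} A.Lang ∧
    @MeasurableSet (ℕ → ℕ) (borel (ℕ → ℕ)) A.Lang := by
  classical
  set F : Finset ℕ := Finset.image A.color Finset.univ with hF
  have memF : ∀ (α : ℕ → ℕ) (k : ℕ), A.color (A.run α k).1 ∈ F := fun α k =>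
    Finset.mem_image_of_mem _ (Finset.mem_univ _)
  have key : A.Lang = ⋃ m ∈ F.filter (fun m => Even m),
      (infSet A m ∩ ⋂ m' ∈ F.filter (fun m' => m < m'), (infSet A m')ᶜ) := by
    ext α
    simp only [DPA.Lang, MaxInfEven, Set.mem_setOf_eq, Set.mem_iUnion, Set.mem_inter_iff,
      Set.mem_iInter, Set.mem_compl_iff, Finset.mem_filter, infSet]
    constructor
    · rintro ⟨m, hev, hinf, hmax⟩
      have hmF : m ∈ F := by
        obtain ⟨k, hk⟩ := hinf.nonempty
        exact hk ▸ memF α k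
      refine ⟨m, ⟨hmF, hev⟩, hinf, ?_⟩
      rintro m' ⟨-, hlt⟩ hinf'
      exact absurd (hmax m' hinf') (by omega)
    · rintro ⟨m, ⟨hmF, hev⟩, hinf, hmax⟩
      refine ⟨m, hev, hinf, fun m' hinf' => ?_⟩
      have hm'F : m' ∈ F := by
        obtain ⟨k, hk⟩ := hinf'.nonempty
        exact hk ▸ memF α k
      by_contra hlt
      exact hmax m' ⟨hm'F, by omega⟩ hinf'
  have hbc : BoolComb {s : Set (ℕ → ℕ) | IsGδ s} A.Lang := by
    rw [key]
    refine boolcomb_biUnion _ _ fun m _ => BoolComb.inter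
      (BoolComb.basic (show infSet A m ∈ {s : Set (ℕ → ℕ) | IsGδ s} from isGδ_infSet A m)) ?_
    exact boolcomb_biInter _ _ fun m' _ =>
      (BoolComb.basic
        (show infSet A m' ∈ {s : Set (ℕ → ℕ) | IsGδ s} from isGδ_infSet A m')).compl
  exact ⟨hbc, meas_of_boolcomb hbc⟩
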